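/- Let A ⊆ Z^d be infinite and connected, and suppose the complement of A has an infinite connected component. Then there exists an infinite surface (an infinite connected set of plaquettes with empty boundary) consisting of plaquettes dual to edges of Z^d having one endpoint in A and the other in the complement of A. -/

import Mathlib

open Set Relation Filter

/-- Vertices of the lattice `ℤ^d`. -/
abbrev V (d : ℕ) := Fin d → ℤ

/-- Nearest-neighbour adjacency in `ℤ^d`: `x` and `y` differ by `1` in exactly
one coordinate. -/
def latAdj {d : ℕ} (x y : V d) : Prop :=
  ∃ i, (x i - y i).natAbs = 1 ∧ ∀ j, j ≠ i → x j = y j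

/-- Connectivity in the complement of `S` (paths avoiding `S`). -/
def connAvoid {d : ℕ} (S : Set (V d)) (a b : V d) : Prop :=
  ReflTransGen (fun u v => latAdj u v ∧ u ∉ S ∧ v ∉ S) a b

/-- The connected component of `w` in the complement of `S`. -/
def compOff {d : ℕ} (S : Set (V d)) (w : V d) : Set (V d) :=
  {z | connAvoid S w z}

/-- `y` lies outside `S` and is joined to infinity off `S` (its component in
the complement of `S` is infinite). -/
def toInfOff {d : ℕ} (S : Set (V d)) (y : V d) : Prop :=
  y ∉ S ∧ (compOff S y).Infinite

/-- `S ⊆ ℤ^d` is connected (as an induced subgraph of the lattice). -/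
def IsLatConnected {d : ℕ} (S : Set (V d)) : Prop :=
  ∀ a ∈ S, ∀ b ∈ S, ReflTransGen (fun u v => latAdj u v ∧ u ∈ S ∧ v ∈ S) a b

/-- `S` together with all its holes (the finite components of its complement). -/
def fillHoles {d : ℕ} (S : Set (V d)) : Set (V d) :=
  S ∪ {w | w ∉ S ∧ (compOff S w).Finite}

/-- We identify a plaquette with its dual edge, realized as an unordered pair of
adjacent lattice points.  `PiS S` is the set of plaquettes dual to edges
`⟨x,y⟩` with `x ∈ S` and `y ∉ S` joined to infinity off `S`. -/
def PiS {d : ℕ} (S : Set (V d)) : Set (Sym2 (V d)) :=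
  {e | ∃ x y, latAdj x y ∧ x ∈ S ∧ toInfOff S y ∧ e = s(x, y)}

/-- The `i`-th unit coordinate vector. -/
def uv {d : ℕ} (i : Fin d) : V d := fun k => if k = i then 1 else 0

/-- A unit square (2-facet) of `ℤ^d`; its dual is a `(d-2)`-facet of the dual
lattice `ℤ^d + (1/2,…,1/2)`. -/
structure Square (d : ℕ) where
  corner : V d
  i : Fin d
  j : Fin d
  hij : i ≠ j

/-- The four edges of a unit square.  A plaquette (identified with its dual
edge `e`) is incident to the `(d-2)`-facet dual to the square `F` exactly when
`e` is one of the four edges of `F`. -/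
def edgesOf {d : ℕ} (F : Square d) : Set (Sym2 (V d)) :=
  {s(F.corner, F.corner + uv F.i), s(F.corner, F.corner + uv F.j),
   s(F.corner + uv F.i, F.corner + uv F.i + uv F.j),
   s(F.corner + uv F.j, F.corner + uv F.i + uv F.j)}

/-- A set of plaquettes has empty boundary if every `(d-2)`-facet of the dual
lattice is incident to an even number of its members. -/
def NoBoundary {d : ℕ} (P : Set (Sym2 (V d))) : Prop :=
  ∀ F : Square d, Even (edgesOf F ∩ P).ncard

/-- Two plaquettes are adjacent if their intersection is a `(d-2)`-facet,
equivalently their dual edges are distinct edges of a common unit square. -/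
def plaqAdj {d : ℕ} (e₁ e₂ : Sym2 (V d)) : Prop :=
  e₁ ≠ e₂ ∧ ∃ F : Square d, e₁ ∈ edgesOf F ∧ e₂ ∈ edgesOf F

/-- A set of plaquettes is connected for the adjacency relation `plaqAdj`. -/
def PlaqConnected {d : ℕ} (P : Set (Sym2 (V d))) : Prop :=
  ∀ a ∈ P, ∀ b ∈ P, ReflTransGen (fun u v => plaqAdj u v ∧ u ∈ P ∧ v ∈ P) a b

-- ## Auxiliary development

lemma latAdj_symm {d : ℕ} {x y : V d} (h : latAdj x y) : latAdj y x := by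
  obtain ⟨i, h1, h2⟩ := h
  exact ⟨i, by omega, fun j hj => (h2 j hj).symm⟩

lemma adj_add_uv {d : ℕ} (x : V d) (i : Fin d) : latAdj x (x + uv i) := by
  refine ⟨i, ?_, fun j hj => ?_⟩
  · simp [uv]
  · simp [uv, hj]

lemma latAdj_cases {d : ℕ} {x y : V d} (h : latAdj x y) :
    ∃ i, y = x + uv i ∨ x = y + uv i := by
  obtain ⟨i, h1, h2⟩ := h
  refine ⟨i, ?_⟩
  have : y i = x i + 1 ∨ x i = y i + 1 := by omega
  rcases this with h | h
  · left; funext l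
    by_cases hl : l = i
    · subst hl; simp [uv, h]
    · simp [uv, hl, h2 l hl]
  · right; funext l
    by_cases hl : l = i
    · subst hl; simp [uv, h]
    · simp [uv, hl, (h2 l hl).symm]

/-- `ℤ^d` is connected. -/
lemma lat_conn_aux {d : ℕ} : ∀ n (x y : V d), (∑ i : Fin d, (x i - y i).natAbs) = n →
    ReflTransGen latAdj x y := by
  intro n
  induction n using Nat.strong_induction_on with
  | _ n ih =>
    intro x y hn
    by_cases hxy : x = y
    · subst hxy; exact .refl
    have hex : ∃ i, x i ≠ y i := by
      by_contra hc
      push_neg at hc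
      exact hxy (funext fun i => hc i)
    obtain ⟨i, hi⟩ := hex
    set s : ℤ := if x i < y i then x i + 1 else x i - 1 with hs
    set x' := Function.update x i s with hx'
    have hadj : latAdj x x' := by
      refine ⟨i, ?_, fun j hj => ?_⟩
      · simp only [hx', Function.update_self]
        rcases lt_or_ge (x i) (y i) with h | h <;> simp [hs] <;> omega
      · simp [hx', Function.update_of_ne hj]
    have hterm : (x' i - y i).natAbs + 1 = (x i - y i).natAbs := by
      simp only [hx', Function.update_self]
      rcases lt_or_ge (x i) (y i) with h | h <;> simp [hs, h] <;> omega
    have hrest : ∀ j ∈ Finset.univ.erase i, (x' j - y j).natAbs = (x j - y j).natAbs := by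
      intro j hj
      rw [hx', Function.update_of_ne (Finset.mem_erase.mp hj).1]
    have hsum : (∑ j : Fin d, (x' j - y j).natAbs) < n := by
      rw [← hn, ← Finset.add_sum_erase _ _ (Finset.mem_univ i),
          ← Finset.add_sum_erase _ (fun j => (x j - y j).natAbs) (Finset.mem_univ i),
          Finset.sum_congr rfl hrest]
      omega
    exact ReflTransGen.head hadj (ih _ hsum x' y rfl)

lemma lat_conn {d : ℕ} (x y : V d) : ReflTransGen latAdj x y := lat_conn_aux _ x y rfl

/-- Moving a single coordinate while preserving a predicate. -/
lemma line_path {d : ℕ} (Pr : V d → Prop) (z : V d) (i : Fin d) (t : ℤ)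
    (h : ∀ s : ℤ, Pr (Function.update z i s)) :
    ReflTransGen (fun u v => latAdj u v ∧ Pr u ∧ Pr v) z (Function.update z i t) := by
  have aux : ∀ m (s : ℤ), (s - t).natAbs = m →
      ReflTransGen (fun u v => latAdj u v ∧ Pr u ∧ Pr v)
        (Function.update z i s) (Function.update z i t) := by
    intro m
    induction m with
    | zero => intro s hsm; have : s = t := by omega
              subst this; exact .refl
    | succ m ihm =>
      intro s hsm
      set s' : ℤ := if s < t then s + 1 else s - 1 with hs'
      have hstep : latAdj (Function.update z i s) (Function.update z i s') := by
        refine ⟨i, ?_, fun j hj => ?_⟩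
        · simp only [Function.update_self]
          rcases lt_or_ge s t with h' | h' <;> simp [hs', h'] <;> omega
        · simp [Function.update_of_ne hj]
      have : (s' - t).natAbs = m := by
        rcases lt_or_ge s t with h' | h' <;> simp [hs', h'] <;> omega
      exact ReflTransGen.head ⟨hstep, h s, h s'⟩ (ihm s' this)
  have h0 := aux _ (z i) rfl
  rwa [Function.update_eq_self] at h0

lemma even_iff_cast (n : ℕ) : Even n ↔ (n : ZMod 2) = 0 := by
  rw [ZMod.natCast_eq_zero_iff, even_iff_two_dvd]
lemma z2 : ∀ a : ZMod 2, a + a = 0 := by decide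
lemma z2' : ∀ a b : ZMod 2, a + b = 0 → a = b := by decide
lemma z2'' : ∀ a b : ZMod 2, a + b = 1 → a ≠ b := by decide

open scoped Classical in
noncomputable def ind {d : ℕ} (P : Set (Sym2 (V d))) (e : Sym2 (V d)) : ZMod 2 :=
  if e ∈ P then 1 else 0

open scoped Classical in
lemma ncard_four {α : Type*} [DecidableEq α] (a b c e : α) (P : Set α)
    (hab : a ≠ b) (hac : a ≠ c) (hae : a ≠ e) (hbc : b ≠ c) (hbe : b ≠ e) (hce : c ≠ e) :
    (({a, b, c, e} : Set α) ∩ P).ncard =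
      (if a ∈ P then 1 else 0) + (if b ∈ P then 1 else 0)
      + (if c ∈ P then 1 else 0) + (if e ∈ P then 1 else 0) := by
  classical
  have hset : ({a, b, c, e} : Set α) ∩ P =
      ↑(({a, b, c, e} : Finset α).filter (· ∈ P)) := by
    ext x
    simp [and_comm]
  rw [hset, Set.ncard_coe_finset, Finset.card_filter]
  rw [Finset.sum_insert (by simp [hab, hac, hae]),
      Finset.sum_insert (by simp [hbc, hbe]),
      Finset.sum_insert (by simp [hce]), Finset.sum_singleton]
  ring

lemma vertex_ne {d : ℕ} (c : V d) (i : Fin d) : c ≠ c + uv i := by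
  intro h
  have := congrFun h i
  simp [uv] at this

lemma vertex_ne2 {d : ℕ} (c : V d) {i j : Fin d} (hij : i ≠ j) : c + uv i ≠ c + uv j := by
  intro h
  have := congrFun h i
  simp [uv, hij] at this

lemma vertex_ne3 {d : ℕ} (c : V d) {i j : Fin d} (hij : i ≠ j) : c ≠ c + uv i + uv j := by
  intro h
  have := congrFun h i
  simp [uv, hij] at this

lemma vertex_ne4 {d : ℕ} (c : V d) {i j : Fin d} (hij : i ≠ j) : c + uv i ≠ c + uv i + uv j := by
  intro h
  have := congrFun h j
  simp [uv, Ne.symm hij] at this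

/-- The parity of a square's intersection as a sum of indicators. -/
lemma ncard_even_iff {d : ℕ} (F : Square d) (P : Set (Sym2 (V d))) :
    Even ((edgesOf F ∩ P).ncard) ↔
      ind P s(F.corner, F.corner + uv F.i) + ind P s(F.corner, F.corner + uv F.j)
      + ind P s(F.corner + uv F.i, F.corner + uv F.i + uv F.j)
      + ind P s(F.corner + uv F.j, F.corner + uv F.i + uv F.j) = 0 := by
  classical
  obtain ⟨c, i, j, hij⟩ := F
  have v01 : c ≠ c + uv i := vertex_ne c i
  have v02 : c ≠ c + uv j := vertex_ne c j
  have v03 : c ≠ c + uv i + uv j := vertex_ne3 c hij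
  have v12 : c + uv i ≠ c + uv j := vertex_ne2 c hij
  have v13 : c + uv i ≠ c + uv i + uv j := vertex_ne4 c hij
  have v23 : c + uv j ≠ c + uv i + uv j := by
    have := vertex_ne4 c hij.symm
    rwa [add_right_comm] at this
  have e12 : s(c, c + uv i) ≠ s(c, c + uv j) := by
    simp only [ne_eq, Sym2.eq_iff]; tauto
  have e13 : s(c, c + uv i) ≠ s(c + uv i, c + uv i + uv j) := by
    simp only [ne_eq, Sym2.eq_iff]; tauto
  have e14 : s(c, c + uv i) ≠ s(c + uv j, c + uv i + uv j) := by
    simp only [ne_eq, Sym2.eq_iff]; tauto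
  have e23 : s(c, c + uv j) ≠ s(c + uv i, c + uv i + uv j) := by
    simp only [ne_eq, Sym2.eq_iff]; tauto
  have e24 : s(c, c + uv j) ≠ s(c + uv j, c + uv i + uv j) := by
    simp only [ne_eq, Sym2.eq_iff]; tauto
  have e34 : s(c + uv i, c + uv i + uv j) ≠ s(c + uv j, c + uv i + uv j) := by
    simp only [ne_eq, Sym2.eq_iff]; tauto
  show Even ((({s(c, c + uv i), s(c, c + uv j), s(c + uv i, c + uv i + uv j),
      s(c + uv j, c + uv i + uv j)} : Set (Sym2 (V d))) ∩ P).ncard) ↔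
    ind P s(c, c + uv i) + ind P s(c, c + uv j) + ind P s(c + uv i, c + uv i + uv j)
      + ind P s(c + uv j, c + uv i + uv j) = 0
  rw [ncard_four _ _ _ _ P e12 e13 e14 e23 e24 e34, even_iff_cast]
  simp only [ind, apply_ite (Nat.cast : ℕ → ZMod 2), Nat.cast_add, Nat.cast_one, Nat.cast_zero]

/-- The square relation for a set of plaquettes that is even on squares. -/
lemma sq_rel {d : ℕ} {P : Set (Sym2 (V d))} (hP : ∀ F : Square d, Even (edgesOf F ∩ P).ncard)
    (z : V d) {i j : Fin d} (hij : i ≠ j) :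
    ind P s(z, z + uv i) + ind P s(z, z + uv j)
      + ind P s(z + uv i, z + uv i + uv j) + ind P s(z + uv j, z + uv i + uv j) = 0 :=
  (ncard_even_iff ⟨z, i, j, hij⟩ P).mp (hP _)

-- ### truncated points
def trunc {d : ℕ} (m : ℕ) (x : V d) : V d := fun l => if (l : ℕ) < m then x l else 0

def qpt {d : ℕ} (x : V d) (j : Fin d) (k : ℤ) : V d :=
  fun l => if (l : ℕ) < (j : ℕ) then x l else if l = j then k else 0

noncomputable def lineSum {d : ℕ} (P : Set (Sym2 (V d))) (x : V d) (j : Fin d) : ZMod 2 :=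
  ∑ k ∈ Finset.Ico (min 0 (x j)) (max 0 (x j)), ind P s(qpt x j k, qpt x j (k+1))

noncomputable def sigma' {d : ℕ} (P : Set (Sym2 (V d))) (x : V d) : ZMod 2 :=
  ∑ j : Fin d, lineSum P x j

lemma qpt_congr {d : ℕ} {x y : V d} {j : Fin d}
    (h : ∀ l : Fin d, (l : ℕ) < (j : ℕ) → x l = y l) (k : ℤ) : qpt x j k = qpt y j k := by
  funext l
  by_cases h1 : (l : ℕ) < (j : ℕ) <;> simp [qpt, h1]
  exact h l h1

lemma qpt_succ {d : ℕ} (x : V d) (j : Fin d) (k : ℤ) :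
    qpt x j (k+1) = qpt x j k + uv j := by
  funext l
  by_cases h1 : (l : ℕ) < (j : ℕ)
  · have hlj : l ≠ j := by intro h; subst h; omega
    simp [qpt, uv, h1, hlj]
  · by_cases h2 : l = j
    · subst h2; simp [qpt, uv, h1]
    · simp [qpt, uv, h1, h2]

lemma qpt_self {d : ℕ} (x : V d) (j : Fin d) : qpt x j (x j) = trunc ((j:ℕ)+1) x := by
  funext l
  by_cases h1 : (l : ℕ) < (j : ℕ)
  · simp [qpt, trunc, h1, show (l:ℕ) < (j:ℕ)+1 by omega]
  · by_cases h2 : l = j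
    · subst h2; simp [qpt, trunc]
    · have hv : (l : ℕ) ≠ (j : ℕ) := fun h => h2 (Fin.ext h)
      simp [qpt, trunc, h1, h2, show ¬ (l:ℕ) < (j:ℕ)+1 by omega]

lemma qpt_zero {d : ℕ} (x : V d) (j : Fin d) : qpt x j 0 = trunc (j:ℕ) x := by
  funext l
  by_cases h1 : (l : ℕ) < (j : ℕ)
  · simp [qpt, trunc, h1]
  · by_cases h2 : l = j
    · subst h2; simp [qpt, trunc]
    · simp [qpt, trunc, h1, h2]

lemma trunc_add_uv {d : ℕ} (x : V d) {i : Fin d} {m : ℕ} (hi : (i:ℕ) < m) :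
    trunc m (x + uv i) = trunc m x + uv i := by
  funext l
  by_cases h1 : (l : ℕ) < m
  · simp [trunc, h1]
  · have hli : l ≠ i := by intro h; subst h; omega
    simp [trunc, uv, h1, hli]

lemma trunc_eq_of_le {d : ℕ} (x : V d) {i : Fin d} {m : ℕ} (hi : m ≤ (i:ℕ)) :
    trunc m (x + uv i) = trunc m x := by
  funext l
  by_cases h1 : (l : ℕ) < m
  · have hli : l ≠ i := by intro h; subst h; omega
    simp [trunc, uv, h1, hli]
  · simp [trunc, h1]

lemma trunc_top {d : ℕ} (x : V d) : trunc d x = x := by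
  funext l; simp [trunc, l.is_lt]

-- ### telescoping sums
lemma sumK1 (f : ℤ → ZMod 2) (t : ℤ) :
    (∑ k ∈ Finset.Ico (min 0 (t+1)) (max 0 (t+1)), f k)
      + (∑ k ∈ Finset.Ico (min 0 t) (max 0 t), f k) = f t := by
  rcases le_or_gt 0 t with h | h
  · rw [min_eq_left (by omega), min_eq_left h, max_eq_right (by omega), max_eq_right h]
    have hins : Finset.Ico (0:ℤ) (t+1) = insert t (Finset.Ico 0 t) := by
      ext k; simp [Finset.mem_Ico]; omega
    rw [hins, Finset.sum_insert (by simp [Finset.mem_Ico])]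
    linear_combination z2 (∑ k ∈ Finset.Ico (0:ℤ) t, f k)
  · rw [min_eq_right (by omega), min_eq_right (by omega), max_eq_left (by omega),
      max_eq_left (by omega)]
    have hins : Finset.Ico t (0:ℤ) = insert t (Finset.Ico (t+1) 0) := by
      ext k; simp [Finset.mem_Ico]; omega
    rw [hins, Finset.sum_insert (by simp [Finset.mem_Ico])]
    linear_combination z2 (∑ k ∈ Finset.Ico (t+1) (0:ℤ), f k)

lemma sumTele_aux (g : ℤ → ZMod 2) : ∀ (n : ℕ) (a b : ℤ), a ≤ b → (b - a).natAbs = n →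
    ∑ k ∈ Finset.Ico a b, (g k + g (k+1)) = g a + g b := by
  intro n
  induction n with
  | zero =>
    intro a b hab hn
    have : a = b := by omega
    subst this
    rw [Finset.Ico_self, Finset.sum_empty]
    exact (z2 (g a)).symm
  | succ n ih =>
    intro a b hab hn
    have hab' : a ≤ b - 1 := by omega
    have hins : Finset.Ico a b = insert (b-1) (Finset.Ico a (b-1)) := by
      ext k; simp [Finset.mem_Ico]; omega
    rw [hins, Finset.sum_insert (by simp [Finset.mem_Ico]), ih a (b-1) hab' (by omega)]
    have hb1 : b - 1 + 1 = b := by ring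
    rw [hb1]
    linear_combination z2 (g (b-1))

lemma sumTele (g : ℤ → ZMod 2) (a b : ℤ) (h : a ≤ b) :
    ∑ k ∈ Finset.Ico a b, (g k + g (k+1)) = g a + g b :=
  sumTele_aux g _ a b h rfl

lemma sumTeleMinMax (g : ℤ → ZMod 2) (t : ℤ) :
    ∑ k ∈ Finset.Ico (min 0 t) (max 0 t), (g k + g (k+1)) = g 0 + g t := by
  rcases le_or_gt 0 t with h | h
  · rw [min_eq_left h, max_eq_right h, sumTele g 0 t h]
  · rw [min_eq_right (by omega), max_eq_left (by omega), sumTele g t 0 (by omega), add_comm]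

lemma sumTeleNat (u : ℕ → ZMod 2) (n : ℕ) :
    ∑ m ∈ Finset.range n, (u m + u (m+1)) = u 0 + u n := by
  induction n with
  | zero => simpa using (z2 (u 0)).symm
  | succ n ih => rw [Finset.sum_range_succ, ih]; linear_combination z2 (u n)

lemma ind_diag {d : ℕ} {P : Set (Sym2 (V d))} (hdiag : ∀ v : V d, s(v,v) ∉ P) (v : V d) :
    ind P s(v,v) = 0 := by
  simp [ind, hdiag v]

-- ### the potential lemma
lemma sigma_edge {d : ℕ} {P : Set (Sym2 (V d))}
    (hP : ∀ F : Square d, Even (edgesOf F ∩ P).ncard)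
    (hdiag : ∀ v : V d, s(v,v) ∉ P) (x : V d) (i : Fin d) :
    sigma' P x + sigma' P (x + uv i) = ind P s(x, x + uv i) := by
  set y := x + uv i with hy
  set T : ℕ → ZMod 2 := fun m => ind P s(trunc m x, trunc m y) with hT
  have hxy_ne : ∀ l : Fin d, l ≠ i → y l = x l := fun l hl => by simp [hy, uv, hl]
  have hyi : y i = x i + 1 := by simp [hy, uv]
  have hTle : ∀ m : ℕ, m ≤ (i:ℕ) → T m = 0 := by
    intro m hm
    have : trunc m y = trunc m x := trunc_eq_of_le x hm
    rw [hT]; simp only [this]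
    exact ind_diag hdiag _
  have key : ∀ j : Fin d, lineSum P x j + lineSum P y j = T (j:ℕ) + T ((j:ℕ)+1) := by
    intro j
    rcases lt_trichotomy ((j:ℕ)) ((i:ℕ)) with hj | hj | hj
    · -- j < i : both sides vanish
      have hxj : x j = y j := (hxy_ne j (fun h => by subst h; omega)).symm
      have hq : ∀ k, qpt x j k = qpt y j k :=
        qpt_congr (fun l hl => (hxy_ne l (fun h => by subst h; omega)).symm)
      have h1 : lineSum P x j = lineSum P y j := by
        unfold lineSum
        rw [hxj]
        exact Finset.sum_congr rfl (fun k _ => by rw [hq, hq])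
      rw [h1, z2, hTle _ (by omega), hTle _ (by omega), add_zero]
    · -- j = i
      have hji : j = i := Fin.ext hj
      subst hji
      have hq : ∀ k, qpt y j k = qpt x j k :=
        qpt_congr (fun l hl => hxy_ne l (fun h => by subst h; omega))
      have h2 : lineSum P y j = ∑ k ∈ Finset.Ico (min 0 (x j + 1)) (max 0 (x j + 1)),
          ind P s(qpt x j k, qpt x j (k+1)) := by
        unfold lineSum
        rw [hyi]
        exact Finset.sum_congr rfl (fun k _ => by rw [hq, hq])
      have h3 := sumK1 (fun k => ind P s(qpt x j k, qpt x j (k+1))) (x j)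
      have h4 : qpt x j (x j + 1) = trunc ((j:ℕ)+1) y := by
        have : qpt x j (y j) = qpt y j (y j) := (hq (y j)).symm
        rw [← hyi, this, qpt_self]
      rw [add_comm, h2]
      unfold lineSum
      rw [h3, qpt_self, h4, hTle _ (le_refl _), zero_add]
    · -- i < j
      have hij : i ≠ j := fun h => by subst h; omega
      have hxj : x j = y j := (hxy_ne j (Ne.symm hij)).symm
      have hq : ∀ k, qpt y j k = qpt x j k + uv i := by
        intro k; funext l
        by_cases h1 : (l : ℕ) < (j : ℕ)
        · simp [qpt, uv, h1, hy]
        · by_cases h2 : l = j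
          · subst h2
            simp [qpt, uv, h1, Ne.symm hij]
          · have hli : l ≠ i := by
              intro h; subst h
              have : (l:ℕ) ≠ (j:ℕ) := fun h => h2 (Fin.ext h)
              omega
            simp [qpt, uv, h1, h2, hli]
      have hper : ∀ k : ℤ, ind P s(qpt x j k, qpt x j (k+1)) + ind P s(qpt y j k, qpt y j (k+1))
          = ind P s(qpt x j k, qpt x j k + uv i)
            + ind P s(qpt x j (k+1), qpt x j (k+1) + uv i) := by
        intro k
        set z := qpt x j k with hz
        have e1 : qpt x j (k+1) = z + uv j := qpt_succ x j k
        have e2 : qpt y j k = z + uv i := hq k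
        have e3 : qpt y j (k+1) = z + uv i + uv j := by
          rw [hq (k+1), e1, add_right_comm]
        rw [e1, e2, e3, add_right_comm z (uv j) (uv i)]
        have := sq_rel hP z hij
        linear_combination this - z2 (ind P s(z, z + uv i)) - z2 (ind P s(z + uv j, z + uv i + uv j))
      have h1 : lineSum P x j + lineSum P y j
          = ∑ k ∈ Finset.Ico (min 0 (x j)) (max 0 (x j)),
              (ind P s(qpt x j k, qpt x j k + uv i)
                + ind P s(qpt x j (k+1), qpt x j (k+1) + uv i)) := by
        unfold lineSum
        rw [← hxj, ← Finset.sum_add_distrib]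
        exact Finset.sum_congr rfl (fun k _ => hper k)
      rw [h1, sumTeleMinMax (fun k => ind P s(qpt x j k, qpt x j k + uv i)) (x j)]
      have g0 : qpt x j 0 + uv i = trunc (j:ℕ) y := by
        rw [qpt_zero, hy, trunc_add_uv x hj]
      have gt' : qpt x j (x j) + uv i = trunc ((j:ℕ)+1) y := by
        rw [qpt_self, hy, trunc_add_uv x (by omega)]
      rw [g0, gt', qpt_zero, qpt_self]
  calc sigma' P x + sigma' P y
      = ∑ j : Fin d, (lineSum P x j + lineSum P y j) := by
        rw [sigma', sigma', Finset.sum_add_distrib]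
    _ = ∑ j : Fin d, (T (j:ℕ) + T ((j:ℕ)+1)) := Finset.sum_congr rfl (fun j _ => key j)
    _ = ∑ m ∈ Finset.range d, (T m + T (m+1)) :=
        Fin.sum_univ_eq_sum_range (fun m => T m + T (m+1)) d
    _ = T 0 + T d := sumTeleNat T d
    _ = ind P s(x, y) := by
        have h0 : T 0 = 0 := hTle 0 (Nat.zero_le _)
        have hd : T d = ind P s(x, y) := by rw [hT]; simp only [trunc_top]
        rw [h0, hd, zero_add]

lemma sigma_adj {d : ℕ} {P : Set (Sym2 (V d))}
    (hP : ∀ F : Square d, Even (edgesOf F ∩ P).ncard)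
    (hdiag : ∀ v : V d, s(v,v) ∉ P) {x y : V d} (h : latAdj x y) :
    sigma' P x + sigma' P y = ind P s(x, y) := by
  obtain ⟨i, hc | hc⟩ := latAdj_cases h
  · subst hc; exact sigma_edge hP hdiag x i
  · subst hc
    rw [add_comm, Sym2.eq_swap]
    exact sigma_edge hP hdiag y i


-- ## Auxiliary lemmas about components of the complement

lemma notA_of_memC {d : ℕ} {A : Set (V d)} {w z : V d} (hz : z ∈ compOff A w)
    (hw : w ∉ A) : z ∉ A := by
  rcases Relation.ReflTransGen.cases_tail hz with h | ⟨c, _, hstep⟩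
  · rwa [h]
  · exact hstep.2.2

lemma reach_A {d : ℕ} {A : Set (V d)} {x z : V d} (h : ReflTransGen latAdj x z)
    (hz : z ∈ A) : x ∉ A → ∃ b aa, connAvoid A x b ∧ latAdj b aa ∧ aa ∈ A := by
  induction h using Relation.ReflTransGen.head_induction_on with
  | refl => exact fun hx => absurd hz hx
  | @head u c step hrest ih =>
    intro hx
    by_cases hc : c ∈ A
    · exact ⟨u, c, .refl, step, hc⟩
    · obtain ⟨b, aa, hp, hba, haa⟩ := ih hc
      exact ⟨b, aa, .head ⟨step, hx, hc⟩ hp, hba, haa⟩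

/-- If `A ⊆ ℤ^d` is infinite and connected and its complement has an infinite
connected component, then there exists an infinite surface (an infinite
connected set of plaquettes with empty boundary) consisting of plaquettes dual
to edges with one endpoint in `A` and the other in the complement of `A`. -/
theorem infinite_surface_separating (d : ℕ) (hd : 2 ≤ d) (A : Set (V d))
    (hinf : A.Infinite) (hconn : IsLatConnected A)
    (hcomp : ∃ w, w ∉ A ∧ (compOff A w).Infinite) :
    ∃ S : Set (Sym2 (V d)), S.Infinite ∧
      (∀ e ∈ S, ∃ x y, latAdj x y ∧ x ∈ A ∧ y ∉ A ∧ e = s(x, y)) ∧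
      PlaqConnected S ∧ NoBoundary S := by
  classical
  obtain ⟨w, hw, hwInf⟩ := hcomp
  set C := compOff A w with hCdef
  set S : Set (Sym2 (V d)) := {e | ∃ x y, latAdj x y ∧ x ∉ C ∧ y ∈ C ∧ e = s(x,y)} with hSdef
  -- basic facts about C and S
  have hCnotA : ∀ {z : V d}, z ∈ C → z ∉ A := fun hz => notA_of_memC hz hw
  have hstepC : ∀ {u v : V d}, u ∈ C → latAdj u v → v ∉ A → v ∈ C :=
    fun hu hadj hv => Relation.ReflTransGen.tail hu ⟨hadj, hCnotA hu, hv⟩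
  have hmemS : ∀ {u v : V d}, latAdj u v → u ∉ C → v ∈ C → s(u,v) ∈ S :=
    fun h h1 h2 => ⟨_, _, h, h1, h2, rfl⟩
  have hSelim : ∀ {e}, e ∈ S → ∃ u v, latAdj u v ∧ u ∉ C ∧ v ∈ C ∧ e = s(u,v) := fun h => h
  have hSboth : ∀ {u v : V d}, (u ∈ C ↔ v ∈ C) → s(u,v) ∉ S := by
    rintro u v hiff ⟨x, y, hadj, hx, hy, he⟩
    rw [Sym2.eq_iff] at he
    rcases he with ⟨rfl, rfl⟩ | ⟨rfl, rfl⟩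
    · exact hx (hiff.mpr hy)
    · exact hx (hiff.mp hy)
  have hdiagS : ∀ v : V d, s(v,v) ∉ S := fun v => hSboth Iff.rfl
  set chi : V d → ZMod 2 := fun v => if v ∈ C then 1 else 0 with hchi
  have hindS : ∀ {u v : V d}, latAdj u v → ind S s(u,v) = chi u + chi v := by
    intro u v h
    by_cases hu : u ∈ C <;> by_cases hv : v ∈ C
    · rw [ind, if_neg (hSboth (iff_of_true hu hv))]
      simp only [hchi, hu, hv, if_true]
      decide
    · rw [Sym2.eq_swap, ind, if_pos (hmemS (latAdj_symm h) hv hu)]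
      simp [hchi, hu, hv]
    · rw [ind, if_pos (hmemS h hu hv)]
      simp [hchi, hu, hv]
    · rw [ind, if_neg (hSboth (iff_of_false hu hv))]
      simp [hchi, hu, hv]
  have hNoB : NoBoundary S := by
    rintro ⟨c, i, j, hij⟩
    rw [ncard_even_iff ⟨c, i, j, hij⟩ S]
    have h4 : latAdj (c + uv j) (c + uv i + uv j) := by
      have := adj_add_uv (c + uv j) i
      rwa [add_right_comm] at this
    rw [show (⟨c,i,j,hij⟩ : Square d).corner = c from rfl,
        show (⟨c,i,j,hij⟩ : Square d).i = i from rfl,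
        show (⟨c,i,j,hij⟩ : Square d).j = j from rfl,
        hindS (adj_add_uv c i), hindS (adj_add_uv c j),
        hindS (adj_add_uv (c + uv i) j), hindS h4]
    linear_combination z2 (chi c) + z2 (chi (c + uv i)) + z2 (chi (c + uv j))
      + z2 (chi (c + uv i + uv j))
  -- the separation property
  have hcond : ∀ e ∈ S, ∃ x y, latAdj x y ∧ x ∈ A ∧ y ∉ A ∧ e = s(x, y) := by
    rintro e ⟨u, v, hadj, hu, hv, rfl⟩
    refine ⟨u, v, hadj, ?_, hCnotA hv, rfl⟩
    by_contra huA
    exact hu (hstepC hv (latAdj_symm hadj) huA)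
  -- crossing lemma
  have hcross : ∀ (Pr : V d → Prop) (x y : V d),
      ReflTransGen (fun u v => latAdj u v ∧ Pr u ∧ Pr v) x y → x ∈ C → y ∉ C →
      ∃ u v, u ∈ C ∧ v ∉ C ∧ latAdj u v ∧ Pr u ∧ Pr v := by
    intro Pr x y h hx
    induction h with
    | refl => exact fun hy => absurd hx hy
    | @tail p q hrest step ih =>
      intro hy
      by_cases hp : p ∈ C
      · exact ⟨p, q, hp, hy, step.1, step.2.1, step.2.2⟩
      · exact ih hp
  -- far connectivity
  set Far : ℕ → V d → Prop := fun n v => ∃ i, n < (v i).natAbs with hFar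
  have hto_q : ∀ (n : ℕ) (z : V d), Far n z →
      ReflTransGen (fun u v => latAdj u v ∧ Far n u ∧ Far n v) z (fun _ => (n:ℤ)+1) := by
    intro n z hz
    obtain ⟨i0, hi0⟩ := hz
    have stage1 : ∀ s : Finset (Fin d), i0 ∉ s →
        ReflTransGen (fun u v => latAdj u v ∧ Far n u ∧ Far n v) z
          (fun l => if l ∈ s then (n:ℤ)+1 else z l) := by
      intro s
      induction s using Finset.induction_on with
      | empty =>
        intro _
        have he : (fun l => if l ∈ (∅ : Finset (Fin d)) then (n:ℤ)+1 else z l) = z := by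
          funext l; simp
        rw [he]
      | @insert a s ha ih =>
        intro hins
        have hia : i0 ≠ a := fun h => hins (h ▸ Finset.mem_insert_self a s)
        have hi0s : i0 ∉ s := fun h => hins (Finset.mem_insert_of_mem h)
        set m : V d := fun l => if l ∈ s then (n:ℤ)+1 else z l with hm
        have h1 := ih hi0s
        have hupd : Function.update m a ((n:ℤ)+1)
            = fun l => if l ∈ insert a s then (n:ℤ)+1 else z l := by
          funext l
          by_cases hla : l = a
          · subst hla; simp [Function.update_self]
          · simp [Function.update_of_ne hla, hm, Finset.mem_insert, hla]
        have h2 := line_path (Far n) m a ((n:ℤ)+1)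
          (fun s' => ⟨i0, by
            rw [Function.update_of_ne hia]
            simpa [hm, hi0s] using hi0⟩)
        rw [hupd] at h2
        exact h1.trans h2
    have h1 := stage1 (Finset.univ.erase i0) (by simp)
    set z1 : V d := fun l => if l ∈ Finset.univ.erase i0 then (n:ℤ)+1 else z l with hz1
    obtain ⟨j1, hj1⟩ : ∃ j1 : Fin d, j1 ≠ i0 := by
      by_cases h0 : i0 = ⟨0, by omega⟩
      · refine ⟨⟨1, by omega⟩, ?_⟩
        rw [h0]
        intro h
        simpa using congrArg Fin.val h
      · exact ⟨⟨0, by omega⟩, fun h => h0 h.symm⟩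
    have h2 := line_path (Far n) z1 i0 ((n:ℤ)+1)
      (fun s' => ⟨j1, by
        rw [Function.update_of_ne hj1]
        have hzz : z1 j1 = (n:ℤ)+1 := by simp [hz1, hj1]
        rw [hzz]
        omega⟩)
    have hupd : Function.update z1 i0 ((n:ℤ)+1) = (fun _ => (n:ℤ)+1) := by
      funext l
      by_cases hl : l = i0
      · subst hl; simp [Function.update_self]
      · simp [Function.update_of_ne hl, hz1, hl]
    rw [hupd] at h2
    exact h1.trans h2
  have hsymmR : ∀ n : ℕ, Symmetric (fun u v => latAdj u v ∧ Far n u ∧ Far n v) :=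
    fun n u v h => ⟨latAdj_symm h.1, h.2.2, h.2.1⟩
  have hfar_conn : ∀ (n : ℕ) (x y : V d), Far n x → Far n y →
      ReflTransGen (fun u v => latAdj u v ∧ Far n u ∧ Far n v) x y :=
    fun n x y hx hy =>
      (hto_q n x hx).trans (by haveI : Std.Symm (fun u v : V d => latAdj u v ∧ Far n u ∧ Far n v) := ⟨fun a b h => hsymmR n h⟩; exact Std.Symm.symm _ _ (hto_q n y hy))
  -- far points in infinite sets
  have hfarpts : ∀ (T : Set (V d)), T.Infinite → ∀ n : ℕ, ∃ x ∈ T, Far n x := by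
    intro T hT n
    by_contra hcon
    push_neg at hcon
    apply hT
    apply Set.Finite.subset (Set.Finite.pi (fun _ : Fin d => Set.finite_Icc (-(n:ℤ)) n))
    intro x hx
    have hx' : ∀ i, (x i).natAbs ≤ n := by
      intro i
      by_contra hgt
      exact hcon x hx ⟨i, by omega⟩
    intro i _
    have h2 : -(n:ℤ) ≤ x i ∧ x i ≤ (n:ℤ) := by
      have := hx' i
      omega
    exact Set.mem_Icc.mpr h2
  -- S is infinite
  have hSinf : S.Infinite := by
    by_contra hfin
    rw [Set.not_infinite] at hfin
    set msz : Sym2 (V d) → ℕ := Sym2.lift ⟨fun u v =>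
      (Finset.univ.sup fun i => (u i).natAbs) ⊔ (Finset.univ.sup fun i => (v i).natAbs),
      fun u v => sup_comm _ _⟩ with hmsz
    obtain ⟨N, hN⟩ := (hfin.image msz).bddAbove
    obtain ⟨x, hxA, hxf⟩ := hfarpts A hinf N
    obtain ⟨y, hyC, hyf⟩ := hfarpts C hwInf N
    have hxC : x ∉ C := fun h => hCnotA h hxA
    obtain ⟨u, v, huC, hvC, hadj, hFu, hFv⟩ :=
      hcross (Far N) y x (hfar_conn N y x hyf hxf) hyC hxC
    have heS : s(v, u) ∈ S := hmemS (latAdj_symm hadj) hvC huC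
    have hle : msz s(v, u) ≤ N := hN (Set.mem_image_of_mem msz heS)
    obtain ⟨i, hi⟩ := hFu
    have hge : (u i).natAbs ≤ msz s(v, u) := by
      rw [hmsz, Sym2.lift_mk]
      exact le_sup_of_le_right (Finset.le_sup (f := fun i => (u i).natAbs) (Finset.mem_univ i))
    omega
  -- plaquette connectivity
  have hPC : PlaqConnected S := by
    intro a ha b hb
    by_contra hnr
    set rel : Sym2 (V d) → Sym2 (V d) → Prop :=
      fun u v => plaqAdj u v ∧ u ∈ S ∧ v ∈ S with hrel
    set P1 : Set (Sym2 (V d)) := {g | g ∈ S ∧ ReflTransGen rel a g} with hP1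
    have haP1 : a ∈ P1 := ⟨ha, .refl⟩
    have hbP1 : b ∉ P1 := fun h => hnr h.2
    have hP1even : ∀ F : Square d, Even ((edgesOf F ∩ P1).ncard) := by
      intro F
      by_cases hF : ∃ g ∈ edgesOf F, g ∈ S ∧ g ∉ P1
      · obtain ⟨g, hgF, hgS, hgP⟩ := hF
        have hempty : edgesOf F ∩ P1 = ∅ := by
          ext g'
          simp only [Set.mem_inter_iff, Set.mem_empty_iff_false, iff_false, not_and]
          intro hg'F hg'P
          obtain ⟨hg'S, hg'R⟩ := hg'P
          exact hgP ⟨hgS, hg'R.tail ⟨⟨fun h => hgP (h ▸ (⟨hg'S, hg'R⟩ : g' ∈ P1)),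
            F, hg'F, hgF⟩, hg'S, hgS⟩⟩
        rw [hempty]
        simp
      · push_neg at hF
        have heq : edgesOf F ∩ P1 = edgesOf F ∩ S := by
          ext g
          constructor
          · rintro ⟨h1, h2⟩; exact ⟨h1, h2.1⟩
          · rintro ⟨h1, h2⟩; exact ⟨h1, hF g h1 h2⟩
        rw [heq]
        exact hNoB F
    have hdiagP1 : ∀ v : V d, s(v,v) ∉ P1 := fun v h => hdiagS v h.1
    have hsig : ∀ {u v : V d}, latAdj u v → sigma' P1 u + sigma' P1 v = ind P1 s(u,v) :=
      fun h => sigma_adj hP1even hdiagP1 h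
    have hflat : ∀ {u v : V d}, latAdj u v → s(u,v) ∉ S → sigma' P1 u = sigma' P1 v := by
      intro u v h hnS
      have h1 := hsig h
      rw [ind, if_neg (fun hm => hnS ((hm : s(u,v) ∈ P1).1))] at h1
      exact z2' _ _ h1
    have hconstC : ∀ {z : V d}, connAvoid A w z → sigma' P1 w = sigma' P1 z ∧ z ∈ C := by
      intro z h
      induction h with
      | refl => exact ⟨rfl, .refl⟩
      | @tail p q hrest step ih =>
        obtain ⟨hsg, hmem⟩ := ih
        have hqC : q ∈ C := hstepC hmem step.1 step.2.2
        exact ⟨hsg.trans (hflat step.1 (hSboth (iff_of_true hmem hqC))), hqC⟩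
    obtain ⟨a0, ha0⟩ := hinf.nonempty
    have hsigA : ∀ {p q : V d},
        ReflTransGen (fun s t => latAdj s t ∧ s ∈ A ∧ t ∈ A) p q →
        sigma' P1 p = sigma' P1 q := by
      intro p q h
      induction h with
      | refl => rfl
      | @tail p' q' hrest step ih =>
        have h1 : p' ∉ C := fun hC => hCnotA hC step.2.1
        have h2 : q' ∉ C := fun hC => hCnotA hC step.2.2
        exact ih.trans (hflat step.1 (hSboth (iff_of_false h1 h2)))
    have hconstNotC : ∀ {u : V d}, u ∉ C → sigma' P1 u = sigma' P1 a0 := by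
      intro u hu
      by_cases huA : u ∈ A
      · exact hsigA (hconn u huA a0 ha0)
      · obtain ⟨bb, aa, hpath, hadj, haa⟩ := reach_A (lat_conn u a0) ha0 huA
        have hconst : ∀ {z : V d}, connAvoid A u z → sigma' P1 u = sigma' P1 z ∧ z ∉ C := by
          intro z h
          induction h with
          | refl => exact ⟨rfl, hu⟩
          | @tail p q hrest step ih =>
            obtain ⟨hsg, hpC⟩ := ih
            have hqC : q ∉ C := fun hc => hpC (hstepC hc (latAdj_symm step.1) step.2.1)
            exact ⟨hsg.trans (hflat step.1 (hSboth (iff_of_false hpC hqC))), hqC⟩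
        obtain ⟨hsg1, hbbC⟩ := hconst hpath
        have haaC : aa ∉ C := fun h => hCnotA h haa
        exact hsg1.trans ((hflat hadj (hSboth (iff_of_false hbbC haaC))).trans
          (hsigA (hconn aa haa a0 ha0)))
    obtain ⟨xa, ya, hadja, hxa, hya, hea⟩ := hSelim ha
    obtain ⟨xb, yb, hadjb, hxb, hyb, heb⟩ := hSelim hb
    have h1 : sigma' P1 xa + sigma' P1 ya = 1 := by
      have := hsig hadja
      rwa [← hea, ind, if_pos haP1] at this
    have h2 : sigma' P1 xb = sigma' P1 yb := by
      have h0 := hsig hadjb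
      rw [← heb, ind, if_neg hbP1] at h0
      exact z2' _ _ h0
    have h3 : sigma' P1 xa = sigma' P1 xb := (hconstNotC hxa).trans (hconstNotC hxb).symm
    have h4 : sigma' P1 ya = sigma' P1 yb := ((hconstC hya).1.symm.trans (hconstC hyb).1)
    exact z2'' _ _ h1 (h3.trans (h2.trans h4.symm))
  exact ⟨S, hSinf, hcond, hPC, hNoB⟩
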